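/- Let (W,S) be a Coxeter system, let G be a group of automorphisms of W preserving S, and let W' := W^G be the fixed subgroup. Let ≤ denote weak right order on W (u ≤ w iff l(u) + l(u⁻¹w) = l(w)). Then: (a) W' with the induced order is a meet-subsemilattice of (W, ≤) closed under joins that exist in W (i.e., any meet or join in W of a subset of W' lies in W'); (b) for w ∈ W lying below some element of W', the minimum element i⊥(w) of {u ∈ W' | w ≤ u} exists and equals ⋁_{σ ∈ G} σ(w), the join in (W, ≤) of the G-orbit of w. -/

import Mathlib

attribute [local instance] Classical.propDecidable
set_option linter.unusedSectionVars false
set_option maxHeartbeats 1000000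


/-- Weak right order of a Coxeter system: `u ≤ w` iff `l(u) + l(u⁻¹w) = l(w)`. -/
def weakRO {B W : Type*} [Group W] {M : CoxeterMatrix B} (cs : CoxeterSystem M W)
    (u w : W) : Prop :=
  cs.length u + cs.length (u⁻¹ * w) = cs.length w

namespace CoxAux

open List CoxeterSystem

variable {B W : Type*} [Group W] {M : CoxeterMatrix B} (cs : CoxeterSystem M W)

local prefix:100 "s" => cs.simple
local prefix:100 "π" => cs.wordProd
local prefix:100 "ℓ" => cs.length
local prefix:100 "ris" => cs.rightInvSeq
local prefix:100 "lis" => cs.leftInvSeq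
local infix:50 " ≼ " => weakRO cs

/-! ### Basic order lemmas -/

theorem le_refl (w : W) : w ≼ w := by simp [weakRO]

theorem one_le (w : W) : (1 : W) ≼ w := by simp [weakRO]

theorem length_le_of_le {u w : W} (h : u ≼ w) : ℓ u ≤ ℓ w := by
  unfold weakRO at h; omega

theorem le_antisymm {u w : W} (h1 : u ≼ w) (h2 : w ≼ u) : u = w := by
  unfold weakRO at h1 h2
  have h3 : ℓ (u⁻¹ * w) = 0 := by omega
  have h4 : u⁻¹ * w = 1 := cs.length_eq_zero_iff.mp h3
  have h5 := mul_eq_one_iff_inv_eq.mp h4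
  simp at h5
  exact h5

theorem eq_of_le_of_length_le {u w : W} (h1 : u ≼ w) (h2 : ℓ w ≤ ℓ u) : u = w := by
  unfold weakRO at h1
  have h3 : ℓ (u⁻¹ * w) = 0 := by omega
  have h4 : u⁻¹ * w = 1 := cs.length_eq_zero_iff.mp h3
  have h5 := mul_eq_one_iff_inv_eq.mp h4
  simp at h5
  exact h5

theorem le_trans {u v w : W} (h1 : u ≼ v) (h2 : v ≼ w) : u ≼ w := by
  unfold weakRO at *
  have ha : ℓ (u⁻¹ * w) ≤ ℓ (u⁻¹ * v) + ℓ (v⁻¹ * w) := by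
    have := cs.length_mul_le (u⁻¹ * v) (v⁻¹ * w)
    simpa [mul_assoc] using this
  have hb : ℓ w ≤ ℓ u + ℓ (u⁻¹ * w) := by
    have := cs.length_mul_le u (u⁻¹ * w)
    simpa using this
  omega

/-- (i) descents propagate up -/
theorem descent_of_le {u w : W} {i : B} (h : u ≼ w) (hd : cs.IsLeftDescent u i) :
    cs.IsLeftDescent w i := by
  unfold weakRO at h
  unfold CoxeterSystem.IsLeftDescent at *
  have : ℓ (s i * w) ≤ ℓ (s i * u) + ℓ (u⁻¹ * w) := by
    have := cs.length_mul_le (s i * u) (u⁻¹ * w)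
    simpa [mul_assoc] using this
  omega

theorem length_smul_of_descent {u : W} {i : B} (hd : cs.IsLeftDescent u i) :
    ℓ (s i * u) + 1 = ℓ u := by
  unfold CoxeterSystem.IsLeftDescent at hd
  rcases cs.length_simple_mul u i with h | h <;> omega

theorem length_smul_of_not_descent {u : W} {i : B} (hd : ¬ cs.IsLeftDescent u i) :
    ℓ (s i * u) = ℓ u + 1 := by
  unfold CoxeterSystem.IsLeftDescent at hd
  rcases cs.length_simple_mul u i with h | h <;> omega

theorem not_descent_smul_of_descent {u : W} {i : B} (hd : cs.IsLeftDescent u i) :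
    ¬ cs.IsLeftDescent (s i * u) i := by
  intro hc
  have h1 := length_smul_of_descent cs hd
  have h2 := length_smul_of_descent cs hc
  rw [cs.simple_mul_simple_cancel_left] at h2
  omega

theorem descent_smul_of_not_descent {u : W} {i : B} (hd : ¬ cs.IsLeftDescent u i) :
    cs.IsLeftDescent (s i * u) i := by
  have h1 := length_smul_of_not_descent cs hd
  unfold CoxeterSystem.IsLeftDescent
  rw [cs.simple_mul_simple_cancel_left]
  omega

/-- (ii-a) -/
theorem smul_le_smul_of_descent {u w : W} {i : B} (h : u ≼ w)
    (hu : cs.IsLeftDescent u i) (hw : cs.IsLeftDescent w i) : (s i * u) ≼ (s i * w) := by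
  have h1 := length_smul_of_descent cs hu
  have h2 := length_smul_of_descent cs hw
  unfold weakRO at *
  have h3 : (s i * u)⁻¹ * (s i * w) = u⁻¹ * w := by
    simp [mul_assoc]
  rw [h3]
  omega

/-- (ii-b) -/
theorem smul_le_smul_of_not_descent {u w : W} {i : B} (h : u ≼ w)
    (hu : ¬ cs.IsLeftDescent u i) (hw : ¬ cs.IsLeftDescent w i) :
    (s i * u) ≼ (s i * w) := by
  have h1 := length_smul_of_not_descent cs hu
  have h2 := length_smul_of_not_descent cs hw
  unfold weakRO at *
  have h3 : (s i * u)⁻¹ * (s i * w) = u⁻¹ * w := by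
    simp [mul_assoc]
  rw [h3]
  omega

theorem le_smul_of_le_of_descents {u w : W} {i : B} (h : (s i * u) ≼ (s i * w))
    (hu : cs.IsLeftDescent u i) (hw : cs.IsLeftDescent w i) : u ≼ w := by
  have := smul_le_smul_of_not_descent cs h (not_descent_smul_of_descent cs hu)
    (not_descent_smul_of_descent cs hw)
  simpa using this

theorem le_smul_of_le_of_not_descents {u w : W} {i : B} (h : (s i * u) ≼ (s i * w))
    (hu : ¬ cs.IsLeftDescent u i) (hw : ¬ cs.IsLeftDescent w i) : u ≼ w := by
  have := smul_le_smul_of_descent cs h (descent_smul_of_not_descent cs hu)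
    (descent_smul_of_not_descent cs hw)
  simpa using this


/-! ### The sign representation and strong exchange -/

theorem ris_cons (i : B) (ω : List B) :
    ris (i :: ω) = ((π ω)⁻¹ * s i * π ω) :: ris ω := rfl

theorem lis_cons (i : B) (ω : List B) :
    lis (i :: ω) = s i :: (lis ω).map (MulAut.conj (s i)) := rfl

noncomputable def sgn (t : W) (l : List W) : ℤˣ :=
  (l.map (fun x => if x = t then (-1 : ℤˣ) else 1)).prod

theorem sgn_nil (t : W) : sgn t ([] : List W) = 1 := rfl

theorem sgn_cons (t x : W) (l : List W) :
    sgn t (x :: l) = (if x = t then (-1:ℤˣ) else 1) * sgn t l := by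
  simp [sgn]

theorem sgn_append (t : W) (l₁ l₂ : List W) :
    sgn t (l₁ ++ l₂) = sgn t l₁ * sgn t l₂ := by
  simp [sgn]

theorem sgn_eq_one_of_not_mem {t : W} {l : List W} (h : t ∉ l) : sgn t l = 1 := by
  apply List.prod_eq_one
  intro x hx
  simp only [List.mem_map] at hx
  obtain ⟨y, hy, rfl⟩ := hx
  rw [if_neg]
  rintro rfl
  exact h hy

theorem mem_of_sgn_ne_one {t : W} {l : List W} (h : sgn t l ≠ 1) : t ∈ l := by
  by_contra hc
  exact h (sgn_eq_one_of_not_mem hc)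

theorem sgn_map_of_injective (t : W) (l : List W) (c : W → W) (hc : Function.Injective c) :
    sgn (c t) (l.map c) = sgn t l := by
  unfold sgn
  rw [List.map_map]
  congr 1
  apply List.map_congr_left
  intro x _
  simp only [Function.comp_apply]
  by_cases hx : x = t
  · simp [hx]
  · rw [if_neg hx, if_neg (fun hcx => hx (hc hcx))]

theorem conj_injective (a b : W) : Function.Injective (fun x : W => a * x * b) := by
  intro x y hxy
  simp only at hxy
  have := mul_right_cancel hxy
  exact mul_left_cancel this

noncomputable def fp (i : B) : Equiv.Perm (W × ℤˣ) :=
  Function.Involutive.toPerm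
    (fun p => (s i * p.1 * s i, if p.1 = s i then -p.2 else p.2)) (by
      rintro ⟨t, e⟩
      by_cases h : t = s i
      · simp [h]
      · have h2 : ¬ (s i * t * s i = s i) := by
          intro hh
          apply h
          calc t = s i * (s i * t * s i) * s i := by
                simp [mul_assoc]
            _ = s i * s i * s i := by rw [hh]
            _ = s i := by simp
        have h3 : s i * (s i * t * s i) * s i = t := by
          calc s i * (s i * t * s i) * s i = (s i * s i) * t * (s i * s i) := by group
            _ = t := by simp
        simp [h, h2, h3])

theorem fp_apply (i : B) (t : W) (e : ℤˣ) :
    fp cs i (t, e) = (s i * t * s i, if t = s i then -e else e) := rfl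

theorem prod_fp (ω : List B) (t : W) (e : ℤˣ) :
    ((ω.map (fp cs)).prod) (t, e) = (π ω * t * (π ω)⁻¹, sgn t (ris ω) * e) := by
  induction ω with
  | nil => simp [sgn_nil]
  | cons i ω ih =>
    rw [List.map_cons, List.prod_cons, Equiv.Perm.mul_apply, ih, fp_apply,
      ris_cons, sgn_cons]
    simp only [Prod.mk.injEq]
    constructor
    · simp [wordProd_cons, mul_assoc, mul_inv_rev]
    · by_cases hc : t = (π ω)⁻¹ * s i * π ω
      · have hc1 : π ω * t * (π ω)⁻¹ = s i := by rw [hc]; group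
        rw [if_pos hc1, if_pos hc.symm]
        simp
      · have hc1 : ¬ (π ω * t * (π ω)⁻¹ = s i) := by
          intro hh
          apply hc
          calc t = (π ω)⁻¹ * (π ω * t * (π ω)⁻¹) * π ω := by group
            _ = (π ω)⁻¹ * s i * π ω := by rw [hh]
        rw [if_neg hc1, if_neg (fun hh => hc hh.symm), one_mul]

/-! ### braid relation for fp -/

theorem prod_map_alternatingWord {G : Type*} [Monoid G] (f : B → G) (i i' : B) (m : ℕ) :
    ((alternatingWord i i' (2*m)).map f).prod = (f i * f i')^m := by
  induction m with
  | zero => simp [alternatingWord]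
  | succ m ih =>
    have h1 : 2 * (m+1) = (2*m+1)+1 := by ring
    rw [h1, alternatingWord_succ' i i' (2*m+1), alternatingWord_succ' i i' (2*m)]
    have h2 : ¬ Even (2*m+1) := by simp [Nat.even_add_one, parity_simps]
    have h3 : Even (2*m) := by simp [parity_simps]
    rw [if_neg h2, if_pos h3]
    rw [List.map_cons, List.map_cons, List.prod_cons, List.prod_cons, ih, pow_succ']
    rw [mul_assoc]

theorem simple_pow_swap (i i' : B) (k : ℕ) :
    s i' * (s i * s i')^k = ((s i * s i')^k)⁻¹ * s i' := by
  induction k with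
  | zero => simp
  | succ k ih =>
    have h1 : s i' * (s i * s i') = (s i * s i')⁻¹ * s i' := by
      rw [mul_inv_rev]
      simp [mul_assoc]
    rw [pow_succ, ← mul_assoc, ih, mul_assoc, h1, ← mul_assoc, mul_inv_rev]
    congr 1
    rw [← mul_inv_rev, ← mul_inv_rev, ← pow_succ, ← pow_succ']

theorem ris_alt_entry (i i' : B) (n : ℕ) :
    (π (alternatingWord i i' n))⁻¹ * s (if Even n then i' else i) * π (alternatingWord i i' n)
      = s i' * (s i * s i')^n := by
  set p := s i * s i' with hp
  rw [cs.prod_alternatingWord_eq_mul_pow]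
  by_cases hn : Even n
  · obtain ⟨k, hk⟩ := hn
    rw [if_pos ⟨k, hk⟩, if_pos ⟨k, hk⟩, one_mul]
    have h2 : n / 2 = k := by omega
    rw [h2]
    calc (p^k)⁻¹ * s i' * p^k
        = (p^k)⁻¹ * (s i' * p^k) := by rw [mul_assoc]
      _ = (p^k)⁻¹ * ((p^k)⁻¹ * s i') := by rw [simple_pow_swap cs i i' k]
      _ = (p^(k+k))⁻¹ * s i' := by rw [pow_add]; group
      _ = s i' * p^(k+k) := (simple_pow_swap cs i i' (k+k)).symm
      _ = s i' * p^n := by rw [← hk]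
  · obtain ⟨k, hk⟩ := Nat.not_even_iff_odd.mp hn
    rw [if_neg hn, if_neg hn]
    have h2 : n / 2 = k := by omega
    rw [h2]
    have hqsq : s i' * s i * s i' = p⁻¹ * s i' := by
      rw [hp, mul_inv_rev]
      simp [mul_assoc]
    calc (s i' * p^k)⁻¹ * s i * (s i' * p^k)
        = (p^k)⁻¹ * (s i' * s i * s i') * p^k := by simp [mul_inv_rev, mul_assoc]
      _ = (p^k)⁻¹ * (p⁻¹ * s i') * p^k := by rw [hqsq]
      _ = (p^k)⁻¹ * p⁻¹ * (s i' * p^k) := by simp [mul_assoc]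
      _ = (p^k)⁻¹ * p⁻¹ * ((p^k)⁻¹ * s i') := by rw [simple_pow_swap cs i i' k]
      _ = (p^(k+k+1))⁻¹ * s i' := by rw [pow_add, pow_add, pow_one]; group
      _ = s i' * p^(k+k+1) := (simple_pow_swap cs i i' (k+k+1)).symm
      _ = s i' * p^n := by rw [show k+k+1 = n by omega]

theorem ris_alternatingWord (i i' : B) (n : ℕ) :
    ris (alternatingWord i i' n)
      = ((List.range n).reverse).map (fun r => s i' * (s i * s i')^r) := by
  induction n with
  | zero => simp [alternatingWord]
  | succ n ih =>
    rw [alternatingWord_succ', ris_cons, ih, ris_alt_entry cs i i' n]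
    rw [List.range_succ]
    simp

theorem sgn_ris_braid (i i' : B) (t : W) :
    sgn t (ris (alternatingWord i i' (2 * M i i'))) = 1 := by
  rw [ris_alternatingWord]
  set g := fun r => s i' * (s i * s i')^r with hg
  have h0 : ∀ (l : List ℕ), sgn t (l.reverse.map g) = sgn t (l.map g) := by
    intro l
    unfold sgn
    rw [List.map_reverse, List.map_reverse, List.prod_reverse]
  rw [h0]
  have h1 : 2 * M i i' = M i i' + M i i' := by ring
  rw [h1, List.range_add, List.map_append]
  have h2 : (List.map (M i i' + ·) (List.range (M i i'))).map g
      = (List.range (M i i')).map g := by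
    rw [List.map_map]
    apply List.map_congr_left
    intro r _
    simp only [Function.comp_apply, hg]
    congr 1
    rw [pow_add, cs.simple_mul_simple_pow i i', one_mul]
  rw [h2, sgn_append]
  exact Int.units_mul_self _

theorem fp_isLiftable : M.IsLiftable (fp cs) := by
  intro i i'
  apply Equiv.ext
  rintro ⟨t, e⟩
  rw [← prod_map_alternatingWord (fp cs) i i' (M i i'), prod_fp]
  have h1 : π (alternatingWord i i' (2 * M i i')) = 1 := by
    rw [cs.prod_alternatingWord_eq_mul_pow]
    have h2 : Even (2 * M i i') := ⟨M i i', by ring⟩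
    rw [if_pos h2, one_mul]
    have h3 : 2 * M i i' / 2 = M i i' := by omega
    rw [h3]
    exact cs.simple_mul_simple_pow i i'
  rw [h1, sgn_ris_braid]
  simp

noncomputable def rho : W →* Equiv.Perm (W × ℤˣ) := cs.lift ⟨fp cs, fp_isLiftable cs⟩

theorem rho_simple (i : B) : rho cs (s i) = fp cs i := cs.lift_apply_simple (fp_isLiftable cs) i

theorem rho_eval (ω : List B) (t : W) (e : ℤˣ) :
    rho cs (π ω) (t, e) = (π ω * t * (π ω)⁻¹, sgn t (ris ω) * e) := by
  rw [← prod_fp]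
  congr 1
  induction ω with
  | nil => simp [rho]
  | cons i ω ih => rw [wordProd_cons, map_mul, List.map_cons, List.prod_cons, rho_simple, ih]

/-! ### reflection sign and strong exchange -/

theorem ris_append (α β : List B) :
    ris (α ++ β) = (ris α).map (fun x => (π β)⁻¹ * x * π β) ++ ris β := by
  induction α with
  | nil => simp
  | cons a α ih =>
    rw [List.cons_append, ris_cons, ris_cons, ih, List.map_cons, List.cons_append]
    congr 1
    rw [wordProd_append]
    simp [mul_assoc]

theorem lis_eq_map_conj (ω : List B) :
    lis ω = (ris ω).map (fun x => π ω * x * (π ω)⁻¹) := by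
  induction ω with
  | nil => simp
  | cons a ω ih =>
    rw [lis_cons, ris_cons, List.map_cons, ih, List.map_map]
    congr 1
    · rw [wordProd_cons]
      simp [mul_assoc]
    · apply List.map_congr_left
      intro x _
      simp only [Function.comp_apply, MulAut.conj_apply, wordProd_cons]
      simp [mul_assoc]

theorem rho_refl (t : W) (ht : cs.IsReflection t) (e : ℤˣ) : rho cs t (t, e) = (t, -e) := by
  obtain ⟨w, i, rfl⟩ := ht
  obtain ⟨ν, rfl⟩ := cs.wordProd_surjective w
  set t := π ν * s i * (π ν)⁻¹ with hts
  have hw : t = π (ν ++ (i :: ν.reverse)) := by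
    rw [wordProd_append, wordProd_cons, wordProd_reverse, hts]
    simp [mul_assoc]
  have htt : t * t = 1 := by rw [hts]; simp [mul_assoc]
  nth_rewrite 1 [hw]
  rw [rho_eval]
  congr 1
  · -- first component
    rw [← hw]
    calc t * t * t⁻¹ = (t * t) * t⁻¹ := by rw [mul_assoc]
      _ = t⁻¹ := by rw [htt, one_mul]
      _ = t := by rw [inv_eq_iff_mul_eq_one, htt]
  · -- sign component
    rw [ris_append, sgn_append, ris_cons, sgn_cons]
    have h1 : π (i :: ν.reverse) = s i * (π ν)⁻¹ := by
      rw [wordProd_cons, wordProd_reverse]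
    have h2 : (π ν.reverse)⁻¹ * s i * π ν.reverse = t := by
      rw [wordProd_reverse, hts]
      simp [mul_assoc]
    rw [if_pos h2]
    have hA : sgn t ((ris ν).map (fun x => (π (i :: ν.reverse))⁻¹ * x * π (i :: ν.reverse)))
        = sgn (s i) (ris ν) := by
      rw [h1]
      have hc : t = (fun x => (s i * (π ν)⁻¹)⁻¹ * x * (s i * (π ν)⁻¹)) (s i) := by
        simp only [mul_inv_rev, inv_inv, inv_simple, hts]
        simp [mul_assoc]
      rw [hc]
      exact sgn_map_of_injective (s i) (ris ν) _ (conj_injective _ _)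
    have hC : sgn t (ris ν.reverse) = sgn (s i) (ris ν) := by
      rw [cs.rightInvSeq_reverse]
      have h3 : sgn t ((lis ν).reverse) = sgn t (lis ν) := by
        unfold sgn
        rw [List.map_reverse, List.prod_reverse]
      rw [h3, lis_eq_map_conj]
      have hc : t = (fun x => π ν * x * (π ν)⁻¹) (s i) := hts
      rw [hc]
      exact sgn_map_of_injective (s i) (ris ν) _ (conj_injective _ _)
    rw [hA, hC]
    have h4 := Int.units_mul_self (sgn (s i) (ris ν))
    calc sgn (s i) (ris ν) * (-1 * sgn (s i) (ris ν)) * e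
        = -(sgn (s i) (ris ν) * sgn (s i) (ris ν)) * e := by rw [neg_one_mul, mul_neg]
      _ = -e := by rw [h4]; simp

/-- Strong exchange, right version -/
theorem mem_ris_of_inv {ω : List B} {t : W} (ht : cs.IsReflection t)
    (hlt : ℓ (π ω * t) < ℓ (π ω)) : t ∈ ris ω := by
  by_contra hmem
  have h1 : rho cs (π ω) (t, 1) = (π ω * t * (π ω)⁻¹, 1) := by
    rw [rho_eval, sgn_eq_one_of_not_mem hmem, one_mul]
  obtain ⟨χ, hχred, hχ⟩ := cs.exists_reduced_word' (π ω * t)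
  have h2 : π ω = π χ * t := by
    rw [← hχ, mul_assoc, ht.mul_self, mul_one]
  have h3 : rho cs (π ω) (t, 1) = rho cs (π χ) (rho cs t (t, 1)) := by
    rw [h2, map_mul]
    rfl
  rw [rho_refl cs t ht, rho_eval, rho_eval] at h3
  have h4' := congrArg Prod.snd h3
  simp only at h4'
  rw [sgn_eq_one_of_not_mem hmem] at h4'
  have h4 : (1 : ℤˣ) = sgn t (ris χ) * (-1) := by
    rw [← h4']
    simp
  have h5 : sgn t (ris χ) ≠ 1 := by
    intro hc
    rw [hc] at h4
    simp at h4
  have h6 := mem_of_sgn_ne_one h5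
  have h7 := cs.isRightInversion_of_mem_rightInvSeq hχred h6
  have h8 : ℓ (π χ * t) < ℓ (π χ) := h7.2
  rw [← h2] at h8
  rw [← hχ] at h8
  omega

theorem exchange_right {ω : List B} {t : W} (ht : cs.IsReflection t)
    (hlt : ℓ (π ω * t) < ℓ (π ω)) :
    ∃ j, j < ω.length ∧ π ω * t = π (ω.eraseIdx j) := by
  have hmem := mem_ris_of_inv cs ht hlt
  obtain ⟨j, hjlen, hget⟩ := List.mem_iff_getElem.mp hmem
  have hj : j < ω.length := by
    rw [cs.length_rightInvSeq] at hjlen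
    exact hjlen
  refine ⟨j, hj, ?_⟩
  have hget' : (ris ω).getD j 1 = t := by
    rw [List.getD_eq_getElem _ _ hjlen]
    exact hget
  rw [← hget']
  exact cs.wordProd_mul_getD_rightInvSeq ω j


theorem mem_lis_of_inv {ω : List B} {t : W} (ht : cs.IsReflection t)
    (hlt : ℓ (t * π ω) < ℓ (π ω)) : t ∈ lis ω := by
  have h1 : ℓ (π ω.reverse * t) < ℓ (π ω.reverse) := by
    rw [wordProd_reverse]
    have h2 : (π ω)⁻¹ * t = (t * π ω)⁻¹ := by
      rw [mul_inv_rev, ht.inv]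
    rw [h2, cs.length_inv, cs.length_inv]
    exact hlt
  have h3 := mem_ris_of_inv cs ht h1
  rw [cs.rightInvSeq_reverse] at h3
  exact List.mem_reverse.mp h3

theorem exchange_left {ω : List B} {t : W} (ht : cs.IsReflection t)
    (hlt : ℓ (t * π ω) < ℓ (π ω)) :
    ∃ j, j < ω.length ∧ ((lis ω).getD j 1 = t) ∧ t * π ω = π (ω.eraseIdx j) := by
  have hmem := mem_lis_of_inv cs ht hlt
  obtain ⟨j, hjlen, hget⟩ := List.mem_iff_getElem.mp hmem
  have hj : j < ω.length := by
    rw [cs.length_leftInvSeq] at hjlen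
    exact hjlen
  have hget' : (lis ω).getD j 1 = t := by
    rw [List.getD_eq_getElem _ _ hjlen]
    exact hget
  refine ⟨j, hj, hget', ?_⟩
  rw [← hget']
  exact cs.getD_leftInvSeq_mul_wordProd ω j

/-- key splitting lemma for a product of two reduced parts -/
theorem split_lemma {α β : List B} (hred : ℓ (π (α ++ β)) = α.length + β.length)
    {t : W} (ht : cs.IsReflection t)
    (hlt : ℓ (t * π (α ++ β)) < ℓ (π (α ++ β))) :
    (ℓ (t * π α) < ℓ (π α)) ∨
      (∃ γ : List B, γ.length + 1 = β.length ∧ t * π (α ++ β) = π α * π γ) := by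
  have hlα : ℓ (π α) = α.length := by
    have h1 := cs.length_wordProd_le α
    have h2 := cs.length_wordProd_le β
    have h3 : ℓ (π (α ++ β)) ≤ ℓ (π α) + ℓ (π β) := by
      rw [wordProd_append]
      exact cs.length_mul_le _ _
    omega
  obtain ⟨j, hj, hget, herase⟩ := exchange_left cs ht hlt
  rw [List.length_append] at hj
  by_cases hcase : j < α.length
  · left
    have h4 : (lis (α ++ β)).getD j 1 = (lis α).getD j 1 := by
      rw [cs.getD_leftInvSeq, cs.getD_leftInvSeq]
      rw [List.take_append_of_le_length (by omega)]
      congr 2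
      rw [List.getElem?_append_left hcase]
    have ht2 : (lis α).getD j 1 = t := by rw [← h4, hget]
    have h5 : t * π α = π (α.eraseIdx j) := by
      rw [← ht2]
      exact cs.getD_leftInvSeq_mul_wordProd α j
    rw [h5, hlα]
    have h6 := List.length_eraseIdx_add_one hcase
    calc ℓ (π (α.eraseIdx j)) ≤ (α.eraseIdx j).length := cs.length_wordProd_le _
      _ < α.length := by omega
  · right
    push_neg at hcase
    refine ⟨β.eraseIdx (j - α.length), ?_, ?_⟩
    · have : j - α.length < β.length := by omega
      rw [List.length_eraseIdx_add_one this]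
    · rw [herase, List.eraseIdx_append_of_length_le hcase, wordProd_append]

/-- every word can be reduced keeping its letters -/
theorem exists_reduced_subword (ω : List B) :
    ∃ χ : List B, cs.IsReduced χ ∧ π χ = π ω ∧ ∀ c ∈ χ, c ∈ ω := by
  generalize hn : ω.length = n
  induction n using Nat.strong_induction_on generalizing ω with
  | _ n IH =>
  by_cases hred : cs.IsReduced ω
  · exact ⟨ω, hred, rfl, fun c hc => hc⟩
  · have hω : ω ≠ [] := by
      rintro rfl
      apply hred
      show ℓ (π ([] : List B)) = ([] : List B).length
      simp
    have hωpos : 0 < ω.length := List.length_pos_iff.mpr hω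
    have hP : ¬ cs.IsReduced (ω.take ((ω.length - 1) + 1)) := by
      have h0 : ω.length - 1 + 1 = ω.length := by omega
      rw [h0, List.take_length]
      exact hred
    have hEx : ∃ k, ¬ cs.IsReduced (ω.take (k+1)) := ⟨ω.length - 1, hP⟩
    set k₀ := Nat.find hEx with hk₀
    have hspec : ¬ cs.IsReduced (ω.take (k₀ + 1)) := Nat.find_spec hEx
    have hmin : ∀ k, k < k₀ → cs.IsReduced (ω.take (k + 1)) := by
      intro k hk
      by_contra hcon
      have : Nat.find hEx ≤ k := Nat.find_le hcon
      omega
    have hk₀red : cs.IsReduced (ω.take k₀) := by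
      rcases Nat.eq_zero_or_pos k₀ with h | h
      · rw [h]
        show ℓ (π (ω.take 0)) = (ω.take 0).length
        simp
      · have := hmin (k₀ - 1) (by omega)
        rwa [Nat.sub_add_cancel h] at this
    have hk₀lt : k₀ < ω.length := by
      have : Nat.find hEx ≤ ω.length - 1 := Nat.find_le hP
      omega
    set c := ω[k₀] with hc
    have htake : ω.take (k₀ + 1) = ω.take k₀ ++ [c] := by
      rw [List.take_succ]
      simp [List.getElem?_eq_getElem hk₀lt, hc]
    have hπtake : π (ω.take (k₀ + 1)) = π (ω.take k₀) * s c := by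
      rw [htake, wordProd_append]
      simp
    have hlen_take : ℓ (π (ω.take k₀)) = k₀ := by
      have h5 : ℓ (π (ω.take k₀)) = (ω.take k₀).length := hk₀red
      rw [h5, List.length_take]
      omega
    have hlt : ℓ (π (ω.take k₀) * s c) < ℓ (π (ω.take k₀)) := by
      have h6 : ℓ (π (ω.take (k₀+1))) ≠ (ω.take (k₀+1)).length := hspec
      rw [List.length_take] at h6
      have h7 : (min (k₀+1) ω.length) = k₀ + 1 := by omega
      rw [h7, hπtake] at h6
      rcases cs.length_mul_simple (π (ω.take k₀)) c with h | h <;> omega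
    obtain ⟨j, hjlt, hdel⟩ := exchange_right cs (cs.isReflection_simple c) hlt
    rw [List.length_take, min_eq_left (by omega)] at hjlt
    set ω₂ := (ω.take k₀).eraseIdx j ++ ω.drop (k₀ + 1) with hω₂
    have hπ₂ : π ω₂ = π ω := by
      rw [hω₂, wordProd_append, ← hdel, ← hπtake]
      rw [← wordProd_append, List.take_append_drop]
    have h8 : j < (ω.take k₀).length := by
      rw [List.length_take]
      omega
    have h9 := List.length_eraseIdx_add_one h8
    have hlen₂ : ω₂.length < n := by
      rw [hω₂, List.length_append, List.length_drop]
      rw [List.length_take] at h9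
      omega
    obtain ⟨χ, hχ1, hχ2, hχ3⟩ := IH ω₂.length hlen₂ ω₂ rfl
    refine ⟨χ, hχ1, by rw [hχ2, hπ₂], ?_⟩
    intro d hd
    have h10 := hχ3 d hd
    rw [hω₂] at h10
    rcases List.mem_append.mp h10 with h | h
    · exact List.mem_of_mem_take (List.eraseIdx_subset h)
    · exact List.mem_of_mem_drop h


/-! ### dihedral lemmas -/

/-- reduced words have no adjacent equal letters -/
theorem reduced_no_adjacent {χ : List B} (h : cs.IsReduced χ) (n : ℕ)
    (h1 : n + 1 < χ.length) : χ[n]'(by omega) ≠ χ[n+1]'h1 := by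
  intro heq
  have hd1 : χ.drop n = χ[n]'(by omega) :: χ.drop (n+1) :=
    List.drop_eq_getElem_cons (by omega)
  have hd2 : χ.drop (n+1) = χ[n+1]'h1 :: χ.drop (n+2) :=
    List.drop_eq_getElem_cons h1
  have hsplit : χ = χ.take n ++ (χ[n]'(by omega) :: χ[n+1]'h1 :: χ.drop (n+2)) := by
    rw [← hd2, ← hd1, List.take_append_drop]
  have hπ : π χ = π (χ.take n ++ χ.drop (n+2)) := by
    nth_rewrite 1 [hsplit]
    rw [wordProd_append, wordProd_append, wordProd_cons, wordProd_cons, ← heq]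
    rw [cs.simple_mul_simple_cancel_left]
  have hlen : ℓ (π χ) ≤ n + (χ.length - (n+2)) := by
    rw [hπ]
    calc ℓ (π (χ.take n ++ χ.drop (n+2))) ≤ (χ.take n ++ χ.drop (n+2)).length :=
          cs.length_wordProd_le _
      _ = n + (χ.length - (n+2)) := by
          rw [List.length_append, List.length_take, List.length_drop]
          omega
  have : ℓ (π χ) = χ.length := h
  omega

/-- the canonical alternating word -/
def altW (i j : B) (k : ℕ) : List B := (List.range k).map (fun r => if r % 2 = 0 then i else j)

theorem altW_length (i j : B) (k : ℕ) : (altW i j k).length = k := by simp [altW]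

theorem altW_take (i j : B) (k m : ℕ) (h : k ≤ m) : (altW i j m).take k = altW i j k := by
  unfold altW
  rw [← List.map_take, List.take_range, min_eq_left h]

theorem eq_altW_of_reduced {χ : List B} {i j : B} (hij : i ≠ j) (hred : cs.IsReduced χ)
    (hJ : ∀ c ∈ χ, c = i ∨ c = j) (hhead : ∀ (h0 : 0 < χ.length), χ[0] = i) :
    χ = altW i j χ.length := by
  have key : ∀ n (h : n < χ.length), χ[n] = if n % 2 = 0 then i else j := by
    intro n
    induction n with
    | zero =>
      intro h
      simp [hhead h]
    | succ n ih =>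
      intro h
      have h2 : n < χ.length := by omega
      have h3 := ih h2
      have h4 := reduced_no_adjacent cs hred n h
      have h5 := hJ (χ[n+1]'h) (List.getElem_mem _)
      by_cases hn0 : n % 2 = 0
      · have hn1 : ¬ ((n+1) % 2 = 0) := by omega
        rw [if_pos hn0] at h3
        rw [if_neg hn1]
        rcases h5 with h5 | h5
        · exact absurd (h3.trans h5.symm) h4
        · exact h5
      · have hn1 : (n+1) % 2 = 0 := by omega
        rw [if_neg hn0] at h3
        rw [if_pos hn1]
        rcases h5 with h5 | h5
        · exact h5
        · exact absurd (h3.trans h5.symm) h4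
  apply List.ext_getElem
  · rw [altW_length]
  · intro n h1 h2
    rw [key n h1]
    simp [altW]

/-- additivity of lengths over minimal coset representatives -/
theorem dihedral_add (i j : B) (x : W)
    (hmin : ∀ g : W, (∃ ω, (∀ c ∈ ω, c = i ∨ c = j) ∧ g = π ω) → ℓ x ≤ ℓ (g * x)) :
    ∀ g : W, (∃ ω, (∀ c ∈ ω, c = i ∨ c = j) ∧ g = π ω) → ℓ (g * x) = ℓ g + ℓ x := by
  intro g hg
  generalize hn : ℓ g = n
  induction n using Nat.strong_induction_on generalizing g with
  | _ n IH =>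
  obtain ⟨ω, hωJ, rfl⟩ := hg
  obtain ⟨χ, hχred, hχπ, hχsub⟩ := exists_reduced_subword cs ω
  rw [← hχπ] at hn ⊢
  have hχJ : ∀ c ∈ χ, c = i ∨ c = j := fun c hc => hωJ c (hχsub c hc)
  match χ, hχred, hχJ, hn with
  | [], _, _, hn =>
    simp at hn ⊢
    omega
  | k :: χ', hχred, hχJ, hn =>
    have hχ'red : cs.IsReduced χ' := by
      have := CoxeterSystem.IsReduced.drop (ω := k :: χ') hχred 1
      simpa using this
    have hlg : ℓ (π (k :: χ')) = χ'.length + 1 := by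
      have : ℓ (π (k :: χ')) = (k :: χ').length := hχred
      rw [this]
      simp
    have hlg' : ℓ (π χ') = χ'.length := hχ'red
    have hg'J : ∃ ω, (∀ c ∈ ω, c = i ∨ c = j) ∧ π χ' = π ω :=
      ⟨χ', fun c hc => hχJ c (List.mem_cons_of_mem _ hc), rfl⟩
    have IH' : ℓ (π χ' * x) = χ'.length + ℓ x := IH χ'.length (by omega) (π χ') hg'J hlg'
    -- now show length goes up when multiplying by s k
    have hup : ¬ ℓ (s k * (π χ' * x)) < ℓ (π χ' * x) := by
      intro hdown
      obtain ⟨ωx, hωxlen, hωxπ⟩ := cs.exists_reduced_word x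
      have hredcat : ℓ (π (χ' ++ ωx)) = χ'.length + ωx.length := by
        rw [wordProd_append, ← hωxπ, IH', hωxπ, hωxlen.eq]
      have hlt2 : ℓ (s k * π (χ' ++ ωx)) < ℓ (π (χ' ++ ωx)) := by
        rw [wordProd_append, ← hωxπ]
        exact hdown
      rcases split_lemma cs hredcat (cs.isReflection_simple k) hlt2 with hleft | ⟨γ, hγlen, hγeq⟩
      · -- contradiction with reducedness of k :: χ'
        have : ℓ (s k * π χ') = ℓ (π (k :: χ')) := by rw [wordProd_cons]
        rw [this, hlg] at hleft
        omega
      · -- contradiction with minimality of x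
        rw [wordProd_append, ← hωxπ] at hγeq
        have hg2J : ∃ ω', (∀ c ∈ ω', c = i ∨ c = j) ∧
            (π χ')⁻¹ * s k * π χ' = π ω' := by
          refine ⟨χ'.reverse ++ [k] ++ χ', ?_, ?_⟩
          · intro c hc
            rcases List.mem_append.mp hc with hc | hc
            · rcases List.mem_append.mp hc with hc | hc
              · exact hχJ c (List.mem_cons_of_mem _ (List.mem_reverse.mp hc))
              · rw [List.mem_singleton.mp hc]
                exact hχJ k List.mem_cons_self
            · exact hχJ c (List.mem_cons_of_mem _ hc)
          · rw [wordProd_append, wordProd_append, wordProd_reverse, wordProd_singleton]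
        have heq2 : ((π χ')⁻¹ * s k * π χ') * x = π γ := by
          have h11 := congrArg (fun z => (π χ')⁻¹ * z) hγeq
          simpa [mul_assoc] using h11
        have hlen2 : ℓ (((π χ')⁻¹ * s k * π χ') * x) ≤ ωx.length - 1 := by
          rw [heq2]
          calc ℓ (π γ) ≤ γ.length := cs.length_wordProd_le _
            _ = ωx.length - 1 := by omega
        have h12 := hmin _ hg2J
        have hωxl : ℓ x = ωx.length := by rw [hωxπ]; exact hωxlen.eq
        omega
    rcases cs.length_simple_mul (π χ' * x) k with h | h
    · rw [wordProd_cons, mul_assoc, h, IH']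
      omega
    · exfalso
      have hne := cs.length_simple_mul_ne (π χ' * x) k
      apply hup
      omega

/-- F1: parabolic factorization gives a dihedral lower bound carrying both descents -/
theorem exists_dihedral_lb {u : W} {i j : B} (hi : cs.IsLeftDescent u i)
    (hj : cs.IsLeftDescent u j) :
    ∃ d : W, weakRO cs d u ∧ cs.IsLeftDescent d i ∧ cs.IsLeftDescent d j ∧
      ∃ ω, (∀ c ∈ ω, c = i ∨ c = j) ∧ d = π ω := by
  set S : Set ℕ := {m | ∃ g ω, (∀ c ∈ ω, c = i ∨ c = j) ∧ g = π ω ∧ ℓ (g * u) = m} with hS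
  have hSne : S.Nonempty := ⟨ℓ u, 1, [], by simp, by simp, by simp⟩
  obtain ⟨g₀, ω₀, hJ₀, hg₀, hlen₀⟩ := Nat.sInf_mem hSne
  set x := g₀ * u with hx
  have hminx : ∀ g : W, (∃ ω, (∀ c ∈ ω, c = i ∨ c = j) ∧ g = π ω) → ℓ x ≤ ℓ (g * x) := by
    rintro g ⟨ωg, hJg, hgeq⟩
    have hmem2 : ℓ (g * x) ∈ S := by
      refine ⟨g * g₀, ωg ++ ω₀, ?_, ?_, ?_⟩
      · intro c hc
        rcases List.mem_append.mp hc with hc | hc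
        · exact hJg c hc
        · exact hJ₀ c hc
      · rw [wordProd_append, ← hgeq, ← hg₀]
      · rw [hx, mul_assoc]
    have h2 := Nat.sInf_le hmem2
    omega
  have hadd := dihedral_add cs i j x hminx
  have hdJ : ∃ ω, (∀ c ∈ ω, c = i ∨ c = j) ∧ g₀⁻¹ = π ω := by
    refine ⟨ω₀.reverse, ?_, by rw [wordProd_reverse, ← hg₀]⟩
    intro c hc
    exact hJ₀ c (List.mem_reverse.mp hc)
  have hdx : g₀⁻¹ * x = u := by rw [hx, inv_mul_cancel_left]
  have hlu : ℓ g₀⁻¹ + ℓ x = ℓ u := by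
    rw [← hdx]
    exact (hadd g₀⁻¹ hdJ).symm
  have hdesc : ∀ k : B, (k = i ∨ k = j) → cs.IsLeftDescent u k → cs.IsLeftDescent g₀⁻¹ k := by
    intro k hk hku
    have hskJ : ∃ ω, (∀ c ∈ ω, c = i ∨ c = j) ∧ s k * g₀⁻¹ = π ω := by
      obtain ⟨ωd, hωd, hd⟩ := hdJ
      refine ⟨k :: ωd, ?_, by rw [wordProd_cons, ← hd]⟩
      intro c hc
      rcases List.mem_cons.mp hc with hc | hc
      · rw [hc]; exact hk
      · exact hωd c hc
    have h3 : ℓ (s k * g₀⁻¹ * x) = ℓ (s k * g₀⁻¹) + ℓ x := hadd _ hskJ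
    have h4 : s k * g₀⁻¹ * x = s k * u := by rw [mul_assoc, hdx]
    unfold CoxeterSystem.IsLeftDescent at hku ⊢
    rw [h4] at h3
    omega
  refine ⟨g₀⁻¹, ?_, hdesc i (Or.inl rfl) hi, hdesc j (Or.inr rfl) hj, hdJ⟩
  show ℓ g₀⁻¹ + ℓ ((g₀⁻¹)⁻¹ * u) = ℓ u
  rw [inv_inv]
  rw [← hx]
  exact hlu

/-- canonical alternating word for a dihedral element with a left descent `i` -/
theorem dihedral_canonical {e : W} {i j : B} (hij : i ≠ j)
    (heJ : ∃ ω, (∀ c ∈ ω, c = i ∨ c = j) ∧ e = π ω) (hdesc : cs.IsLeftDescent e i) :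
    e = π (altW i j (ℓ e)) := by
  obtain ⟨ω, hJ, rfl⟩ := heJ
  have h1 : ℓ (s i * π ω) + 1 = ℓ (π ω) := length_smul_of_descent cs hdesc
  obtain ⟨χ', hred', hπ', hsub'⟩ := exists_reduced_subword cs (i :: ω)
  have hπ'2 : π χ' = s i * π ω := by rw [hπ', wordProd_cons]
  have hχπ : π (i :: χ') = π ω := by
    rw [wordProd_cons, hπ'2, cs.simple_mul_simple_cancel_left]
  have hχ'len : χ'.length = ℓ (s i * π ω) := by
    have := hred'
    unfold CoxeterSystem.IsReduced at this
    rw [hπ'2] at this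
    omega
  have hχlen : ℓ (π (i :: χ')) = (i :: χ').length := by
    rw [hχπ, List.length_cons]
    omega
  have hχred : cs.IsReduced (i :: χ') := hχlen
  have hχJ : ∀ c ∈ (i :: χ'), c = i ∨ c = j := by
    intro c hc
    rcases List.mem_cons.mp hc with hc | hc
    · exact Or.inl hc
    · rcases List.mem_cons.mp (hsub' c hc) with h | h
      · exact Or.inl h
      · exact hJ c h
  have hhead : ∀ (h0 : 0 < (i :: χ').length), (i :: χ')[0] = i := fun _ => rfl
  have halt := eq_altW_of_reduced cs hij hχred hχJ hhead
  have hlen2 : (i :: χ').length = ℓ (π ω) := by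
    rw [List.length_cons]
    omega
  rw [← hχπ]
  nth_rewrite 1 [halt]
  rw [hlen2, hχπ]

/-- comparability of dihedral elements sharing the descent `i` -/
theorem dihedral_le {d e : W} {i j : B} (hij : i ≠ j)
    (hdJ : ∃ ω, (∀ c ∈ ω, c = i ∨ c = j) ∧ d = π ω)
    (heJ : ∃ ω, (∀ c ∈ ω, c = i ∨ c = j) ∧ e = π ω)
    (hdi : cs.IsLeftDescent d i) (hei : cs.IsLeftDescent e i)
    (hlen : ℓ e ≤ ℓ d) : weakRO cs e d := by
  have hd := dihedral_canonical cs hij hdJ hdi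
  have he := dihedral_canonical cs hij heJ hei
  have htake : (altW i j (ℓ d)).take (ℓ e) = altW i j (ℓ e) := altW_take i j _ _ hlen
  have hsplit : π (altW i j (ℓ d)) = π (altW i j (ℓ e)) * π ((altW i j (ℓ d)).drop (ℓ e)) := by
    conv_lhs => rw [← List.take_append_drop (ℓ e) (altW i j (ℓ d))]
    rw [wordProd_append, htake]
  show ℓ e + ℓ (e⁻¹ * d) = ℓ d
  have h2 : e⁻¹ * d = π ((altW i j (ℓ d)).drop (ℓ e)) := by
    nth_rewrite 1 [hd]
    rw [hsplit, ← he, inv_mul_cancel_left]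
  have h3 : ℓ (e⁻¹ * d) ≤ ℓ d - ℓ e := by
    rw [h2]
    calc ℓ (π ((altW i j (ℓ d)).drop (ℓ e))) ≤ ((altW i j (ℓ d)).drop (ℓ e)).length :=
          cs.length_wordProd_le _
      _ = ℓ d - ℓ e := by rw [List.length_drop, altW_length]
  have h4 : ℓ d ≤ ℓ e + ℓ (e⁻¹ * d) := by
    have h5 := cs.length_mul_le e (e⁻¹ * d)
    simpa using h5
  omega

/-- common lower bound with both descents -/
theorem exists_common_lb {u v : W} {i j : B} (hij : i ≠ j)
    (hui : cs.IsLeftDescent u i) (huj : cs.IsLeftDescent u j)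
    (hvi : cs.IsLeftDescent v i) (hvj : cs.IsLeftDescent v j) :
    ∃ z : W, weakRO cs z u ∧ weakRO cs z v ∧ cs.IsLeftDescent z i ∧ cs.IsLeftDescent z j := by
  obtain ⟨du, hdu_le, hdui, hduj, hduJ⟩ := exists_dihedral_lb cs hui huj
  obtain ⟨dv, hdv_le, hdvi, hdvj, hdvJ⟩ := exists_dihedral_lb cs hvi hvj
  rcases le_total (ℓ du) (ℓ dv) with h | h
  · exact ⟨du, hdu_le, le_trans cs (dihedral_le cs hij hdvJ hduJ hdvi hdui h) hdv_le,
      hdui, hduj⟩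
  · exact ⟨dv, le_trans cs (dihedral_le cs hij hduJ hdvJ hdui hdvi h) hdu_le, hdv_le,
      hdvi, hdvj⟩


/-! ### existence of meets -/

theorem meet_exists (u v : W) :
    ∃ m : W, weakRO cs m u ∧ weakRO cs m v ∧
      ∀ b : W, weakRO cs b u → weakRO cs b v → weakRO cs b m := by
  generalize hn : ℓ u + ℓ v = n
  induction n using Nat.strong_induction_on generalizing u v with
  | _ n IH =>
  by_cases hcd : ∃ i, cs.IsLeftDescent u i ∧ cs.IsLeftDescent v i
  · obtain ⟨i, hui, hvi⟩ := hcd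
    have cand : ∀ k : B, cs.IsLeftDescent u k → cs.IsLeftDescent v k →
        ∃ mk : W, weakRO cs mk u ∧ weakRO cs mk v ∧
          (∀ b : W, weakRO cs b u → weakRO cs b v → cs.IsLeftDescent b k → weakRO cs b mk) := by
      intro k huk hvk
      have hlu := length_smul_of_descent cs huk
      have hlv := length_smul_of_descent cs hvk
      obtain ⟨m', hm'u, hm'v, hm'g⟩ :=
        IH (ℓ (s k * u) + ℓ (s k * v)) (by omega) (s k * u) (s k * v) rfl
      have hnd : ¬ cs.IsLeftDescent m' k := by
        intro hc
        exact not_descent_smul_of_descent cs huk (descent_of_le cs hm'u hc)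
      have hndsu : ¬ cs.IsLeftDescent (s k * u) k := not_descent_smul_of_descent cs huk
      have hndsv : ¬ cs.IsLeftDescent (s k * v) k := not_descent_smul_of_descent cs hvk
      refine ⟨s k * m', ?_, ?_, ?_⟩
      · have h1 := smul_le_smul_of_not_descent cs hm'u hnd hndsu
        rwa [cs.simple_mul_simple_cancel_left] at h1
      · have h1 := smul_le_smul_of_not_descent cs hm'v hnd hndsv
        rwa [cs.simple_mul_simple_cancel_left] at h1
      · intro b hbu hbv hbk
        have h1 := smul_le_smul_of_descent cs hbu hbk huk
        have h2 := smul_le_smul_of_descent cs hbv hbk hvk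
        have h3 := hm'g (s k * b) h1 h2
        have h4 := smul_le_smul_of_not_descent cs h3
          (not_descent_smul_of_descent cs hbk) hnd
        rwa [cs.simple_mul_simple_cancel_left] at h4
    obtain ⟨m, hmu, hmv, hmg⟩ := cand i hui hvi
    refine ⟨m, hmu, hmv, ?_⟩
    intro b hbu hbv
    by_cases hb1 : b = 1
    · rw [hb1]
      exact one_le cs m
    · by_cases hbi : cs.IsLeftDescent b i
      · exact hmg b hbu hbv hbi
      · obtain ⟨j, hbj⟩ := cs.exists_leftDescent_of_ne_one hb1
        have hij : i ≠ j := by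
          rintro rfl
          exact hbi hbj
        have huj := descent_of_le cs hbu hbj
        have hvj := descent_of_le cs hbv hbj
        obtain ⟨mj, hmju, hmjv, hmjg⟩ := cand j huj hvj
        have hbmj : weakRO cs b mj := hmjg b hbu hbv hbj
        obtain ⟨z, hzu, hzv, hzi, hzj⟩ := exists_common_lb cs hij hui huj hvi hvj
        have hzmj : weakRO cs z mj := hmjg z hzu hzv hzj
        have hmji : cs.IsLeftDescent mj i := descent_of_le cs hzmj hzi
        have hmjm : weakRO cs mj m := hmg mj hmju hmjv hmji
        exact le_trans cs hbmj hmjm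
  · refine ⟨1, one_le cs u, one_le cs v, ?_⟩
    intro b hbu hbv
    by_cases hb : b = 1
    · rw [hb]
      exact le_refl cs 1
    · obtain ⟨k, hk⟩ := cs.exists_leftDescent_of_ne_one hb
      exact absurd ⟨k, descent_of_le cs hbu hk, descent_of_le cs hbv hk⟩ hcd

/-! ### least upper bounds of bounded sets -/

theorem lub_exists {A : Set W} (hbd : ∃ w : W, ∀ a ∈ A, weakRO cs a w) :
    ∃ m : W, (∀ a ∈ A, weakRO cs a m) ∧ ∀ b : W, (∀ a ∈ A, weakRO cs a b) → weakRO cs m b := by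
  set T : Set ℕ := {n | ∃ b : W, (∀ a ∈ A, weakRO cs a b) ∧ ℓ b = n} with hT
  have hTne : T.Nonempty := by
    obtain ⟨w, hw⟩ := hbd
    exact ⟨ℓ w, w, hw, rfl⟩
  obtain ⟨b₀, hb₀, hb₀len⟩ := Nat.sInf_mem hTne
  refine ⟨b₀, hb₀, ?_⟩
  intro b hb
  obtain ⟨c, hcb₀, hcb, hcg⟩ := meet_exists cs b₀ b
  have hcUB : ∀ a ∈ A, weakRO cs a c := fun a ha => hcg a (hb₀ a ha) (hb a ha)
  have h1 : sInf T ≤ ℓ c := Nat.sInf_le ⟨c, hcUB, rfl⟩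
  have h2 : c = b₀ := eq_of_le_of_length_le cs hcb₀ (by omega)
  rw [← h2]
  exact hcb

/-! ### automorphisms preserving the simple reflections -/

theorem length_map_le (σ : MulAut W)
    (hσ : σ '' Set.range cs.simple ⊆ Set.range cs.simple) (w : W) : ℓ (σ w) ≤ ℓ w := by
  obtain ⟨ω, hlen, rfl⟩ := cs.exists_reduced_word w
  have key : ∀ ω' : List B, ∃ ω'' : List B, ω''.length = ω'.length ∧ σ (π ω') = π ω'' := by
    intro ω'
    induction ω' with
    | nil => exact ⟨[], rfl, by simp⟩
    | cons c ω' ih =>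
      obtain ⟨ω'', hlen'', heq''⟩ := ih
      have h1 : σ (s c) ∈ Set.range cs.simple := hσ ⟨s c, ⟨c, rfl⟩, rfl⟩
      obtain ⟨c', hc'⟩ := h1
      refine ⟨c' :: ω'', by simp [hlen''], ?_⟩
      rw [wordProd_cons, map_mul, heq'', wordProd_cons, hc']
  obtain ⟨ω'', hlen'', heq''⟩ := key ω
  rw [heq'']
  calc ℓ (π ω'') ≤ ω''.length := cs.length_wordProd_le _
    _ = ω.length := hlen''
    _ = ℓ (π ω) := hlen.eq.symm

theorem length_map_eq (σ : MulAut W)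
    (hσ : σ '' Set.range cs.simple = Set.range cs.simple)
    (hσ' : ⇑(σ⁻¹) '' Set.range cs.simple = Set.range cs.simple) (w : W) : ℓ (σ w) = ℓ w := by
  have h1 := length_map_le cs σ (by rw [hσ]) w
  have h2 := length_map_le cs σ⁻¹ (by rw [hσ']) (σ w)
  have h3 : σ⁻¹ (σ w) = w := by simp
  rw [h3] at h2
  omega

theorem weakRO_map (σ : MulAut W)
    (hσ : σ '' Set.range cs.simple = Set.range cs.simple)
    (hσ' : ⇑(σ⁻¹) '' Set.range cs.simple = Set.range cs.simple)
    {u w : W} (h : weakRO cs u w) : weakRO cs (σ u) (σ w) := by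
  unfold weakRO at h ⊢
  rw [length_map_eq cs σ hσ hσ', show (σ u)⁻¹ * σ w = σ (u⁻¹ * w) by rw [map_mul, map_inv],
    length_map_eq cs σ hσ hσ', length_map_eq cs σ hσ hσ']
  exact h

end CoxAux


/-- Let `(W, S)` be a Coxeter system, `G` a group of automorphisms of `W` preserving
`S`, and `W' = W^G` the fixed subgroup, with `≤` the weak right order on `W`. Then:
(a) any meet or join in `(W, ≤)` of a subset of `W'` lies in `W'`; (b) for any `w ∈ W`
lying below some element of `W'`, the set `{u ∈ W' | w ≤ u}` has a minimum element,
and this minimum is the join in `(W, ≤)` of the `G`-orbit `{σ w | σ ∈ G}` of `w`. -/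
theorem stmt17 {B W : Type*} [Group W] {M : CoxeterMatrix B} (cs : CoxeterSystem M W)
    (G : Subgroup (MulAut W))
    (hG : ∀ σ ∈ G, (σ : MulAut W) '' Set.range cs.simple = Set.range cs.simple) :
    (∀ A : Set W, A ⊆ {w : W | ∀ σ ∈ G, σ w = w} →
      ∀ m : W, ((∀ a ∈ A, weakRO cs m a) ∧ ∀ b : W, (∀ a ∈ A, weakRO cs b a) →
          weakRO cs b m) →
        m ∈ {w : W | ∀ σ ∈ G, σ w = w}) ∧
    (∀ A : Set W, A ⊆ {w : W | ∀ σ ∈ G, σ w = w} →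
      ∀ m : W, ((∀ a ∈ A, weakRO cs a m) ∧ ∀ b : W, (∀ a ∈ A, weakRO cs a b) →
          weakRO cs m b) →
        m ∈ {w : W | ∀ σ ∈ G, σ w = w}) ∧
    (∀ w : W, (∃ u, (∀ σ ∈ G, σ u = u) ∧ weakRO cs w u) →
      ∃ m : W, (∀ σ ∈ G, σ m = m) ∧ weakRO cs w m ∧
        (∀ u : W, (∀ σ ∈ G, σ u = u) → weakRO cs w u → weakRO cs m u) ∧
        (∀ σ ∈ G, weakRO cs (σ w) m) ∧
        (∀ b : W, (∀ σ ∈ G, weakRO cs (σ w) b) → weakRO cs m b)) := by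
  have hmaple : ∀ σ : MulAut W, σ ∈ G → ∀ u w : W, weakRO cs u w →
      weakRO cs (σ u) (σ w) := by
    intro σ hσ u w h
    exact CoxAux.weakRO_map cs σ (hG σ hσ) (hG σ⁻¹ (inv_mem hσ)) h
  refine ⟨?_, ?_, ?_⟩
  · -- meets of fixed sets are fixed
    rintro A hA m ⟨hlb, hgr⟩ σ hσ
    have key : ∀ τ : MulAut W, τ ∈ G → weakRO cs (τ m) m := by
      intro τ hτ
      apply hgr
      intro a ha
      have h1 := hmaple τ hτ m a (hlb a ha)
      rwa [hA ha τ hτ] at h1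
    have h1 : weakRO cs (σ m) m := key σ hσ
    have h2 : weakRO cs (σ⁻¹ m) m := key σ⁻¹ (inv_mem hσ)
    have h3 := hmaple σ hσ _ _ h2
    rw [show σ (σ⁻¹ m) = m by simp] at h3
    exact CoxAux.le_antisymm cs h1 h3
  · -- joins of fixed sets are fixed
    rintro A hA m ⟨hub, hleast⟩ σ hσ
    have key : ∀ τ : MulAut W, τ ∈ G → weakRO cs m (τ m) := by
      intro τ hτ
      apply hleast
      intro a ha
      have h1 := hmaple τ hτ a m (hub a ha)
      rwa [hA ha τ hτ] at h1
    have h1 : weakRO cs m (σ m) := key σ hσ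
    have h2 : weakRO cs m (σ⁻¹ m) := key σ⁻¹ (inv_mem hσ)
    have h3 := hmaple σ hσ _ _ h2
    rw [show σ (σ⁻¹ m) = m by simp] at h3
    exact CoxAux.le_antisymm cs h3 h1
  · -- part (b)
    rintro w ⟨u₀, hu₀fix, hwu₀⟩
    set A : Set W := {x | ∃ σ : MulAut W, σ ∈ G ∧ x = σ w} with hAdef
    have hbd : ∃ b : W, ∀ a ∈ A, weakRO cs a b := by
      refine ⟨u₀, ?_⟩
      rintro a ⟨σ, hσ, rfl⟩
      have h1 := hmaple σ hσ w u₀ hwu₀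
      rwa [hu₀fix σ hσ] at h1
    obtain ⟨m, hub, hleast⟩ := CoxAux.lub_exists cs hbd
    have hwA : w ∈ A := ⟨1, one_mem G, by simp⟩
    have hwm : weakRO cs w m := hub w hwA
    have gen : ∀ σ : MulAut W, σ ∈ G → weakRO cs m (σ m) := by
      intro σ hσ
      apply hleast
      rintro a ⟨τ, hτ, rfl⟩
      have hmem : weakRO cs ((σ⁻¹ * τ : MulAut W) w) m :=
        hub _ ⟨σ⁻¹ * τ, mul_mem (inv_mem hσ) hτ, rfl⟩
      have h1 := hmaple σ hσ _ _ hmem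
      rwa [show σ ((σ⁻¹ * τ : MulAut W) w) = τ w by simp] at h1
    have hfixm : ∀ σ ∈ G, σ m = m := by
      intro σ hσ
      have h1 : weakRO cs m (σ m) := gen σ hσ
      have h2 : weakRO cs m (σ⁻¹ m) := gen σ⁻¹ (inv_mem hσ)
      have h3 := hmaple σ hσ _ _ h2
      rw [show σ (σ⁻¹ m) = m by simp] at h3
      exact CoxAux.le_antisymm cs h3 h1
    refine ⟨m, hfixm, hwm, ?_, ?_, ?_⟩
    · intro u hufix hwu
      apply hleast
      rintro a ⟨σ, hσ, rfl⟩
      have h1 := hmaple σ hσ w u hwu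
      rwa [hufix σ hσ] at h1
    · intro σ hσ
      exact hub _ ⟨σ, hσ, rfl⟩
    · intro b hb
      apply hleast
      rintro a ⟨σ, hσ, rfl⟩
      exact hb σ hσ
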